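/- For 0 ≤ k < n, p(n-1,k,0) ≤ p(n,k,0). -/
import Mathlib


/-- `c n k d` : number of permutations of `{1,...,n}` (modeled as `Fin n`)
with exactly `d` fixed points among the first `k` points. -/
noncomputable def c (n k d : ℕ) : ℕ :=
  Nat.card {α : Equiv.Perm (Fin n) //
    (Finset.univ.filter (fun i : Fin n => (i : ℕ) < k ∧ α i = i)).card = d}

/-- `p n k d = c n k d / n!`, the probability that a uniformly random permutation
of `[n]` has exactly `d` fixed points among the first `k` points. -/
noncomputable def p (n k d : ℕ) : ℝ := (c n k d : ℝ) / (Nat.factorial n)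

/-- `f n k d = c (n-1) k d / c n k d`, the conditional probability that the
`(k+1)`-st point is fixed given exactly `d` fixed points among the first `k` points. -/
noncomputable def f (n k d : ℕ) : ℝ := (c (n - 1) k d : ℝ) / (c n k d)

lemma cond_iff (n k : ℕ) (α : Equiv.Perm (Fin n)) :
    (Finset.univ.filter (fun i : Fin n => (i : ℕ) < k ∧ α i = i)).card = 0 ↔
      ∀ i : Fin n, (i : ℕ) < k → α i ≠ i := by
  rw [Finset.card_eq_zero, Finset.filter_eq_empty_iff]
  simp [not_and]

/-- extend a permutation of `Fin m` to `Fin (m+1)` fixing the last point -/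
def myext (m : ℕ) (σ : Equiv.Perm (Fin m)) : Equiv.Perm (Fin (m + 1)) :=
  (finSuccEquivLast).symm.permCongr σ.optionCongr

lemma myext_castSucc (m : ℕ) (σ : Equiv.Perm (Fin m)) (i : Fin m) :
    myext m σ (Fin.castSucc i) = Fin.castSucc (σ i) := by
  simp [myext, Equiv.permCongr_apply]

lemma myext_last (m : ℕ) (σ : Equiv.Perm (Fin m)) :
    myext m σ (Fin.last m) = Fin.last m := by
  simp [myext, Equiv.permCongr_apply]

lemma key (m k : ℕ) (hk : k ≤ m) :
    (m + 1) * c m k 0 ≤ c (m + 1) k 0 := by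
  classical
  have h2 : Nat.card (Fin (m + 1) × {σ : Equiv.Perm (Fin m) //
      (Finset.univ.filter (fun i : Fin m => (i : ℕ) < k ∧ σ i = i)).card = 0})
      = (m + 1) * c m k 0 := by
    rw [Nat.card_prod, Nat.card_eq_fintype_card, Fintype.card_fin, c]
  rw [← h2, c]
  apply Nat.card_le_card_of_injective
    (f := fun x : Fin (m + 1) × {σ : Equiv.Perm (Fin m) //
        (Finset.univ.filter (fun i : Fin m => (i : ℕ) < k ∧ σ i = i)).card = 0} =>
      (⟨Equiv.swap (Fin.last m) x.1 * myext m x.2.1, by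
        rw [cond_iff]
        intro i hi
        have him : (i : ℕ) < m := lt_of_lt_of_le hi hk
        set j : Fin m := ⟨(i : ℕ), him⟩ with hj
        have hij : i = Fin.castSucc j := by ext; simp [hj]
        have hne : x.2.1 j ≠ j := by
          have := (cond_iff m k x.2.1).mp x.2.2 j hi
          exact this
        rw [hij]
        have happ : (Equiv.swap (Fin.last m) x.1 * myext m x.2.1) (Fin.castSucc j)
            = Equiv.swap (Fin.last m) x.1 (Fin.castSucc (x.2.1 j)) := by
          simp [myext_castSucc]
        rw [happ, Equiv.swap_apply_def]
        split_ifs with h1 h2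
        · exact absurd h1 (Fin.castSucc_lt_last _).ne
        · exact (Fin.castSucc_lt_last j).ne'
        · exact fun h => hne (Fin.castSucc_injective m h)⟩ :
        {τ : Equiv.Perm (Fin (m + 1)) //
          (Finset.univ.filter (fun i : Fin (m + 1) => (i : ℕ) < k ∧ τ i = i)).card = 0}))
  intro a b hab
  have hab' : Equiv.swap (Fin.last m) a.1 * myext m a.2.1
      = Equiv.swap (Fin.last m) b.1 * myext m b.2.1 := congrArg Subtype.val hab
  have hv : a.1 = b.1 := by
    have := congrArg (fun e : Equiv.Perm (Fin (m + 1)) => e (Fin.last m)) hab'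
    simpa [myext_last] using this
  have hσ : a.2.1 = b.2.1 := by
    rw [hv] at hab'
    have hext : myext m a.2.1 = myext m b.2.1 := mul_left_cancel hab'
    ext i
    have := congrArg (fun e : Equiv.Perm (Fin (m + 1)) => e (Fin.castSucc i)) hext
    simp only [myext_castSucc] at this
    exact congrArg Fin.val (Fin.castSucc_injective m this)
  exact Prod.ext hv (Subtype.ext hσ)

theorem stmt13 (n k : ℕ) (hk : k < n) :
    p (n - 1) k 0 ≤ p n k 0 := by
  obtain ⟨m, rfl⟩ : ∃ m, n = m + 1 :=
    ⟨n - 1, (Nat.succ_pred_eq_of_pos (lt_of_le_of_lt (Nat.zero_le k) hk)).symm⟩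
  simp only [Nat.add_sub_cancel, p]
  rw [div_le_div_iff₀ (by positivity) (by positivity)]
  have h := key m k (Nat.lt_succ_iff.mp hk)
  have h' : ((m + 1 : ℕ) : ℝ) * (c m k 0 : ℝ) ≤ (c (m + 1) k 0 : ℝ) := by
    exact_mod_cast h
  rw [Nat.factorial_succ]
  push_cast
  push_cast at h'
  calc (c m k 0 : ℝ) * ((m + 1) * (Nat.factorial m : ℝ))
      = ((m : ℝ) + 1) * (c m k 0 : ℝ) * (Nat.factorial m : ℝ) := by ring
    _ ≤ (c (m + 1) k 0 : ℝ) * (Nat.factorial m : ℝ) := by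
        apply mul_le_mul_of_nonneg_right h' (by positivity)
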